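/- Let W ∈ ℝ^{m×l}, Y ∈ ℝ^{n×l} have orthonormal columns with W^T U = 0 and Y^T V = 0, and let D ∈ ℝ^{l×l} be an invertible diagonal matrix. Then X_+ := U Σ V^T + α W D Y^T has rank s + l for every α ≠ 0. -/

import Mathlib

open Matrix

theorem rank_increase_update (m n s l : ℕ)
    (U : Matrix (Fin m) (Fin s) ℝ) (V : Matrix (Fin n) (Fin s) ℝ)
    (hU : Uᵀ * U = 1) (hV : Vᵀ * V = 1)
    (W : Matrix (Fin m) (Fin l) ℝ) (Y : Matrix (Fin n) (Fin l) ℝ)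
    (hW : Wᵀ * W = 1) (hY : Yᵀ * Y = 1)
    (hWU : Wᵀ * U = 0) (hYV : Yᵀ * V = 0)
    (σ : Fin s → ℝ) (hσ : ∀ i, σ i ≠ 0)
    (d : Fin l → ℝ) (hd : ∀ i, d i ≠ 0)
    (α : ℝ) (hα : α ≠ 0) :
    (U * Matrix.diagonal σ * Vᵀ + α • (W * Matrix.diagonal d * Yᵀ)).rank = s + l := by
  set C₁ : Matrix (Fin m) (Fin s ⊕ Fin l) ℝ := fromCols U W with hC₁
  set C₂ : Matrix (Fin n) (Fin s ⊕ Fin l) ℝ := fromCols V Y with hC₂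
  set M : Matrix (Fin s ⊕ Fin l) (Fin s ⊕ Fin l) ℝ :=
    diagonal (Sum.elim σ (fun i => α * d i)) with hM
  have hUW : Uᵀ * W = 0 := by
    have := congrArg transpose hWU
    simpa [Matrix.transpose_mul] using this
  have hVY : Vᵀ * Y = 0 := by
    have := congrArg transpose hYV
    simpa [Matrix.transpose_mul] using this
  have hC₁orth : C₁ᵀ * C₁ = 1 := by
    rw [hC₁, transpose_fromCols, fromRows_mul_fromCols, hU, hW, hWU, hUW,
      ← fromBlocks_one]
  have hC₂orth : C₂ᵀ * C₂ = 1 := by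
    rw [hC₂, transpose_fromCols, fromRows_mul_fromCols, hV, hY, hYV, hVY,
      ← fromBlocks_one]
  have hMblocks : M = fromBlocks (diagonal σ) 0 0 (α • diagonal d) := by
    rw [hM]
    ext (i | i) (j | j) <;> simp [diagonal_apply]
  have hX : U * Matrix.diagonal σ * Vᵀ + α • (W * Matrix.diagonal d * Yᵀ) =
      C₁ * M * C₂ᵀ := by
    rw [hMblocks, hC₁, hC₂, transpose_fromCols, fromCols_mul_fromBlocks,
      fromCols_mul_fromRows]
    simp [Matrix.mul_smul, Matrix.smul_mul, Matrix.mul_assoc]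
  have hrankM : M.rank = s + l := by
    rw [hM, Matrix.rank_diagonal]
    have : ∀ i : Fin s ⊕ Fin l, Sum.elim σ (fun i => α * d i) i ≠ 0 := by
      rintro (i | i) <;> simp [hσ, hd, hα]
    rw [Fintype.card_congr (Equiv.subtypeUnivEquiv this)]
    simp
  rw [hX]
  apply le_antisymm
  · exact le_trans (Matrix.rank_mul_le_left _ _)
      (le_trans (Matrix.rank_mul_le_right _ _) (le_of_eq hrankM))
  · have hMeq : M = C₁ᵀ * (C₁ * M * C₂ᵀ) * C₂ := by
      rw [show C₁ᵀ * (C₁ * M * C₂ᵀ) * C₂ = (C₁ᵀ * C₁) * M * (C₂ᵀ * C₂) by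
        simp only [Matrix.mul_assoc], hC₁orth, hC₂orth, Matrix.one_mul, Matrix.mul_one]
    calc (s + l : ℕ) = M.rank := hrankM.symm
      _ = (C₁ᵀ * (C₁ * M * C₂ᵀ) * C₂).rank := by rw [← hMeq]
      _ ≤ (C₁ * M * C₂ᵀ).rank :=
        le_trans (Matrix.rank_mul_le_left _ _) (Matrix.rank_mul_le_right _ _)
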